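/- (Greater Than Support) For every natural number lo and every natural number a, a ∈ ⟦greaterThan lo⟧ ↔ a > lo. -/
import Mathlib


namespace PBT

inductive Gen : Type → Type 1 where
  | pure {α : Type} : α → Gen α
  | pick {α : Type} : Gen α → Gen α → Gen α
  | bind {α β : Type} : Gen α → (α → Gen β) → Gen β
  | indexed {α : Type} : (ℕ → Gen (Option α)) → Gen α
  | assume {α : Type} : (b : Bool) → (b = true → Gen α) → Gen α

instance : Pure Gen := ⟨Gen.pure⟩
instance : Bind Gen := ⟨Gen.bind⟩

def Gen.support : {α : Type} → Gen α → Set α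
  | _, .pure a' => {a | a = a'}
  | _, .pick x y => {a | a ∈ x.support ∨ a ∈ y.support}
  | _, .bind x f => {a | ∃ a', a' ∈ x.support ∧ a ∈ (f a').support}
  | _, .indexed f => {a | (∃ n, some a ∈ (f n).support) ∧
      (∀ a' n, some a' ∈ (f n).support → some a' ∈ (f (n + 1)).support)}
  | _, .assume b k => {a | ∃ h : b = true, a ∈ (k h).support}

notation (priority := high) "⟦" g "⟧" => Gen.support g

def arbNat.go : ℕ → Gen (Option ℕ)
  | 0 => .pure none
  | fuel + 1 =>
    .pick (.pure (some 0))
      (arbNat.go fuel >>= fun on' =>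
        match on' with
        | none => .pure none
        | some n' => .pure (some (1 + n')))

def arbNat : Gen ℕ := .indexed arbNat.go

def greaterThan (n : ℕ) : Gen ℕ := arbNat >>= fun lo => .pure (lo + 1 + n)


theorem go_support (fuel n : ℕ) : some n ∈ ⟦arbNat.go fuel⟧ ↔ n < fuel := by
  induction fuel generalizing n with
  | zero => simp [arbNat.go, Gen.support]
  | succ f ih =>
    simp only [arbNat.go, Gen.support, Bind.bind, Set.mem_setOf_eq]
    constructor
    · rintro (h | ⟨o, ho, h⟩)
      · simp [Gen.support] at h; omega
      · match o with
        | none => simp [Gen.support] at h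
        | some m =>
          simp [Gen.support] at h
          subst h
          have := (ih m).mp ho
          omega
    · intro h
      match n with
      | 0 => left; rfl
      | m + 1 =>
        right
        exact ⟨some m, (ih m).mpr (by omega), by simp [Gen.support]; omega⟩

theorem arbNat_support (a : ℕ) : a ∈ ⟦arbNat⟧ := by
  constructor
  · exact ⟨a + 1, (go_support _ _).mpr (by omega)⟩
  · intro a' n h
    exact (go_support _ _).mpr (by have := (go_support n a').mp h; omega)

theorem greaterThan_support (lo : ℕ) (a : ℕ) : a ∈ ⟦greaterThan lo⟧ ↔ a > lo := by
  simp only [greaterThan, Bind.bind, Gen.support, Set.mem_setOf_eq]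
  constructor
  · rintro ⟨l, _, h⟩; omega
  · intro h; exact ⟨a - 1 - lo, arbNat_support _, by omega⟩


end PBT
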